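/- Let Δ ≥ 2 be an integer, let T be a tree on n ≥ 2 vertices with maximum degree at most Δ, let v₀ be a vertex of T of degree at most Δ − 1, and let B be a positive integer with B < n. Then the vertex set of T can be partitioned into two nonempty sets V″ and V′, each inducing a connected subgraph (subtree) of T, such that (B−1)/(Δ−1) < |V″| ≤ B and v₀ ∈ V′. -/

import Mathlib

open SimpleGraph Finset

namespace TreeSplitAux

variable {V : Type} [Fintype V] [DecidableEq V] {G : SimpleGraph V} [DecidableRel G.Adj]
variable (P : ∀ u w : V, G.Walk u w)
variable (hP : ∀ u w, (P u w).IsPath)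
variable (hPu : ∀ (u w : V) (p : G.Walk u w), p.IsPath → p = P u w)
variable (S : V → V → Finset V)
variable (hS : ∀ u c w, w ∈ S u c ↔ s(u, c) ∈ (P u w).edges)

/-- If an edge `s(c,d)` lies on a path starting at `c`, it is the first edge. -/
lemma first_edge {c d w : V} (p : G.Walk c w) (hp : p.IsPath)
    (he : s(c, d) ∈ p.edges) :
    ∃ (h : G.Adj c d) (q : G.Walk d w), p = Walk.cons h q ∧ q.IsPath ∧ c ∉ q.support := by
  cases p with
  | nil => simp at he
  | @cons _ x _ h' q =>
    rw [Walk.cons_isPath_iff] at hp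
    rw [Walk.edges_cons, List.mem_cons] at he
    rcases he with he | he
    · have hdx : d = x := Sym2.congr_right.mp he
      subst hdx
      exact ⟨h', q, rfl, hp.1, hp.2⟩
    · exact absurd (q.fst_mem_support_of_mem_edges he) hp.2

include hPu hS in
lemma not_self_mem (u c : V) : u ∉ S u c := by
  have hnil : P u u = Walk.nil := (hPu u u Walk.nil (by simp)).symm
  rw [hS, hnil]
  simp

include hPu hS in
lemma mem_self_adj {u c : V} (h : G.Adj u c) : c ∈ S u c := by
  have : P u c = Walk.cons h Walk.nil := by
    refine (hPu u c _ ?_).symm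
    simp [Walk.cons_isPath_iff, h.ne]
  rw [hS, this]
  simp

include hP hPu hS in
lemma mem_S_cons {u c w : V} (h : G.Adj u c) (hw : w ∈ S u c) :
    P u w = Walk.cons h (P c w) ∧ u ∉ (P c w).support := by
  rw [hS] at hw
  obtain ⟨h', q, hpq, hq, hcq⟩ := first_edge (P u w) (hP u w) hw
  have hq' : q = P c w := hPu c w q hq
  subst hq'
  exact ⟨hpq, hcq⟩

include hP hPu hS in
lemma support_subset_S {u c w : V} (h : G.Adj u c) (hw : w ∈ S u c) :
    ∀ x ∈ (P c w).support, x ∈ S u c := by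
  intro x hx
  obtain ⟨heq, hus⟩ := mem_S_cons P hP hPu S hS h hw
  have hup : u ∉ ((P c w).takeUntil x hx).support :=
    fun hc => hus ((P c w).support_takeUntil_subset hx hc)
  have hpath : (Walk.cons h ((P c w).takeUntil x hx)).IsPath :=
    ((hP c w).takeUntil hx).cons hup
  have heq2 : Walk.cons h ((P c w).takeUntil x hx) = P u x := hPu u x _ hpath
  rw [hS, ← heq2, Walk.edges_cons]
  exact List.mem_cons_self

include hP hPu hS in
lemma support_not_mem {u c w : V} (hw : w ∉ S u c) :
    ∀ x ∈ (P u w).support, x ∉ S u c := by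
  intro x hx hxS
  apply hw
  rw [hS] at hxS ⊢
  have heq : P u x = (P u w).takeUntil x hx := (hPu u x _ ((hP u w).takeUntil hx)).symm
  rw [heq] at hxS
  exact (P u w).edges_takeUntil_subset hx hxS

include hP hPu hS in
lemma mem_child {u c w : V} (h : G.Adj u c) (hw : w ∈ S u c) (hwc : w ≠ c) :
    ∃ d ∈ (G.neighborFinset c).erase u, w ∈ S c d := by
  obtain ⟨heq, hus⟩ := mem_S_cons P hP hPu S hS h hw
  have hnn : ¬ (P c w).Nil := Walk.not_nil_of_ne (Ne.symm hwc)
  obtain ⟨d, hcd, r, hr⟩ := Walk.not_nil_iff.mp hnn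
  refine ⟨d, ?_, ?_⟩
  · rw [Finset.mem_erase, mem_neighborFinset]
    refine ⟨?_, hcd⟩
    intro hdu
    apply hus
    rw [hr, Walk.support_cons]
    exact List.mem_cons_of_mem _ (hdu ▸ r.start_mem_support)
  · rw [hS, hr, Walk.edges_cons]
    exact List.mem_cons_self

include hP hPu hS in
lemma child_subset {u c d w : V} (hadj : G.Adj u c) (hcd : G.Adj c d) (hdu : d ≠ u)
    (hw : w ∈ S c d) : w ∈ S u c ∧ w ≠ c := by
  have hwc : w ≠ c := by
    rintro rfl
    exact not_self_mem P hPu S hS _ d hw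
  obtain ⟨heq, hcs⟩ := mem_S_cons P hP hPu S hS hcd hw
  -- show u is not on the path from c to w
  have hu : u ∉ (P c w).support := by
    rw [heq, Walk.support_cons]
    intro hu
    rcases List.mem_cons.mp hu with rfl | hu
    · exact hadj.ne rfl
    · -- u on P d w : build two distinct paths from c to u
      have ht : ((P d w).takeUntil u hu).IsPath := (hP d w).takeUntil hu
      have hct : c ∉ ((P d w).takeUntil u hu).support :=
        fun hc => hcs ((P d w).support_takeUntil_subset hu hc)
      have h1 : Walk.cons hcd ((P d w).takeUntil u hu) = P c u := hPu c u _ (ht.cons hct)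
      have h2 : Walk.cons hadj.symm Walk.nil = P c u := by
        refine hPu c u _ ?_
        simp [Walk.cons_isPath_iff, hadj.ne']
      have hlen := congrArg Walk.length (h1.trans h2.symm)
      simp [Walk.length_cons] at hlen
      exact hdu hlen
  refine ⟨?_, hwc⟩
  have hpath : (Walk.cons hadj (P c w)).IsPath := (hP c w).cons hu
  have heq2 : Walk.cons hadj (P c w) = P u w := hPu u w _ hpath
  rw [hS, ← heq2, Walk.edges_cons]
  exact List.mem_cons_self

include hP hS in
lemma children_disjoint {c d d' : V} (hne : d ≠ d') : Disjoint (S c d) (S c d') := by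
  rw [Finset.disjoint_left]
  intro w hw hw'
  rw [hS] at hw hw'
  obtain ⟨h1, q1, e1, _, _⟩ := first_edge (P c w) (hP c w) hw
  obtain ⟨h2, q2, e2, _, _⟩ := first_edge (P c w) (hP c w) hw'
  have hsup := congrArg Walk.support (e1.symm.trans e2)
  rw [Walk.support_cons, Walk.support_cons, q1.support_eq_cons, q2.support_eq_cons] at hsup
  simp only [List.cons.injEq] at hsup
  exact hne hsup.2.1

include hP hPu hS in
lemma S_decomp {u c : V} (h : G.Adj u c) :
    S u c = insert c (((G.neighborFinset c).erase u).biUnion (fun d => S c d)) := by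
  ext w
  rw [Finset.mem_insert, Finset.mem_biUnion]
  constructor
  · intro hw
    by_cases hwc : w = c
    · exact Or.inl hwc
    · exact Or.inr (mem_child P hP hPu S hS h hw hwc)
  · rintro (rfl | ⟨d, hd, hwd⟩)
    · exact mem_self_adj P hPu S hS h
    · rw [Finset.mem_erase, mem_neighborFinset] at hd
      exact (child_subset P hP hPu S hS h hd.2 hd.1 hwd).1

include hP hPu hS in
lemma S_card {u c : V} (h : G.Adj u c) :
    (S u c).card = 1 + ∑ d ∈ (G.neighborFinset c).erase u, (S c d).card := by
  rw [S_decomp P hP hPu S hS h]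
  rw [Finset.card_insert_of_notMem, Finset.card_biUnion, add_comm]
  · intro d _ d' _ hne
    exact children_disjoint P hP S hS hne
  · rw [Finset.mem_biUnion]
    rintro ⟨d, _, hcd⟩
    exact not_self_mem P hPu S hS c d hcd

include hP hPu hS in
lemma univ_decomp (v₀ : V) :
    (Finset.univ : Finset V) = insert v₀ ((G.neighborFinset v₀).biUnion (fun c => S v₀ c)) := by
  ext w
  simp only [Finset.mem_univ, true_iff, Finset.mem_insert, Finset.mem_biUnion]
  by_cases hw : w = v₀
  · exact Or.inl hw
  · right
    have hnn : ¬ (P v₀ w).Nil := Walk.not_nil_of_ne (fun hh => hw hh.symm)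
    obtain ⟨c, hvc, r, hr⟩ := Walk.not_nil_iff.mp hnn
    refine ⟨c, mem_neighborFinset .. |>.mpr hvc, ?_⟩
    rw [hS, hr, Walk.edges_cons]
    exact List.mem_cons_self

include hP hPu hS in
lemma univ_card (v₀ : V) :
    Fintype.card V = 1 + ∑ c ∈ G.neighborFinset v₀, (S v₀ c).card := by
  rw [← Finset.card_univ, univ_decomp P hP hPu S hS v₀,
    Finset.card_insert_of_notMem, Finset.card_biUnion, add_comm]
  · intro d _ d' _ hne
    exact children_disjoint P hP S hS hne
  · rw [Finset.mem_biUnion]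
    rintro ⟨c, _, hc⟩
    exact not_self_mem P hPu S hS v₀ c hc

lemma reach_induce (s : Set V) :
    ∀ {a b : V} (p : G.Walk a b), (∀ x ∈ p.support, x ∈ s) →
      ∀ (ha : a ∈ s) (hb : b ∈ s), (G.induce s).Reachable ⟨a, ha⟩ ⟨b, hb⟩ := by
  intro a b p
  induction p with
  | nil => intro _ _ _; rfl
  | @cons x y z h q ih =>
    intro hsup ha hb
    have hc : y ∈ s := hsup y (by simp [Walk.support_cons])
    refine Reachable.trans ?_ (ih (fun t ht => hsup t (by rw [Walk.support_cons]; exact List.mem_cons_of_mem _ ht)) hc hb)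
    exact Adj.reachable (by simpa using h)

end TreeSplitAux

/-- Lemma 9: a tree on `n ≥ 2` vertices with maximum degree at most `Δ`, rooted at a
vertex `v₀` of degree at most `Δ - 1`, can be split into two complementary subtrees
`V''` and `V'` with `(B-1)/(Δ-1) < |V''| ≤ B` and `v₀ ∈ V'`. -/
theorem tree_split (Δ n B : ℕ) (hΔ : 2 ≤ Δ) (hn : 2 ≤ n) (hB : 0 < B) (hBn : B < n)
    (V : Type) [Fintype V] [DecidableEq V] (G : SimpleGraph V) [DecidableRel G.Adj]
    (hcard : Fintype.card V = n) (htree : G.IsTree)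
    (hmaxdeg : ∀ v : V, G.degree v ≤ Δ)
    (v₀ : V) (hv₀ : G.degree v₀ ≤ Δ - 1) :
    ∃ V'' V' : Finset V,
      Disjoint V'' V' ∧ V'' ∪ V' = Finset.univ ∧
      V''.Nonempty ∧ V'.Nonempty ∧
      (G.induce (V'' : Set V)).Connected ∧ (G.induce (V' : Set V)).Connected ∧
      ((B : ℝ) - 1) / ((Δ : ℝ) - 1) < (V''.card : ℝ) ∧ V''.card ≤ B ∧ v₀ ∈ V' := by
  classical
  have hEU := htree.existsUnique_path
  choose P hP hPu using hEU
  set S : V → V → Finset V := fun u c => Finset.univ.filter (fun w => s(u, c) ∈ (P u w).edges)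
    with hSdef
  have hS : ∀ u c w, w ∈ S u c ↔ s(u, c) ∈ (P u w).edges := by
    intro u c w; simp [hSdef]
  have hΔ1 : 0 < Δ - 1 := by omega
  -- candidate set
  set C : Finset (V × V) := Finset.univ.filter
      (fun p => G.Adj p.1 p.2 ∧ v₀ ∉ S p.1 p.2 ∧ B - 1 < (Δ - 1) * (S p.1 p.2).card)
    with hCdef
  have hCmem : ∀ a b : V, (a, b) ∈ C ↔
      G.Adj a b ∧ v₀ ∉ S a b ∧ B - 1 < (Δ - 1) * (S a b).card := by
    intro a b; simp [hCdef]
  -- C is nonempty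
  have hCne : C.Nonempty := by
    by_contra hempty
    rw [Finset.not_nonempty_iff_eq_empty] at hempty
    have hsmall : ∀ c ∈ G.neighborFinset v₀, (Δ - 1) * (S v₀ c).card ≤ B - 1 := by
      intro c hc
      rw [SimpleGraph.mem_neighborFinset] at hc
      by_contra hgt
      have : (v₀, c) ∈ C :=
        (hCmem v₀ c).mpr ⟨hc, TreeSplitAux.not_self_mem P hPu S hS v₀ c, by omega⟩
      rw [hempty] at this
      exact absurd this (Finset.notMem_empty _)
    have hsum := TreeSplitAux.univ_card P hP hPu S hS v₀
    rw [hcard] at hsum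
    have h1 : (Δ - 1) * ∑ c ∈ G.neighborFinset v₀, (S v₀ c).card
        ≤ (G.neighborFinset v₀).card * (B - 1) := by
      rw [Finset.mul_sum]
      calc ∑ c ∈ G.neighborFinset v₀, (Δ - 1) * (S v₀ c).card
          ≤ ∑ _c ∈ G.neighborFinset v₀, (B - 1) := Finset.sum_le_sum hsmall
        _ = (G.neighborFinset v₀).card * (B - 1) := by rw [Finset.sum_const, smul_eq_mul]
    have hdeg : (G.neighborFinset v₀).card ≤ Δ - 1 := hv₀
    have h2 : (Δ - 1) * ∑ c ∈ G.neighborFinset v₀, (S v₀ c).card ≤ (Δ - 1) * (B - 1) :=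
      h1.trans (Nat.mul_le_mul_right _ hdeg)
    have h3 : ∑ c ∈ G.neighborFinset v₀, (S v₀ c).card ≤ B - 1 :=
      Nat.le_of_mul_le_mul_left h2 hΔ1
    omega
  -- pick a minimal candidate
  obtain ⟨⟨u, c⟩, huc, hmin⟩ := C.exists_min_image (fun p => (S p.1 p.2).card) hCne
  obtain ⟨hadj, hv0S, hlow⟩ := (hCmem u c).mp huc
  -- upper bound on children
  have hchild : ∀ d ∈ (G.neighborFinset c).erase u, (Δ - 1) * (S c d).card ≤ B - 1 := by
    intro d hd
    rw [Finset.mem_erase, SimpleGraph.mem_neighborFinset] at hd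
    obtain ⟨hdu, hcd⟩ := hd
    have hsub : ∀ w ∈ S c d, w ∈ S u c ∧ w ≠ c := fun w hw =>
      TreeSplitAux.child_subset P hP hPu S hS hadj hcd hdu hw
    have hcardlt : (S c d).card < (S u c).card := by
      have : S c d ⊆ (S u c).erase c := fun w hw =>
        Finset.mem_erase.mpr ⟨(hsub w hw).2, (hsub w hw).1⟩
      calc (S c d).card ≤ ((S u c).erase c).card := Finset.card_le_card this
        _ < (S u c).card :=
          Finset.card_erase_lt_of_mem (TreeSplitAux.mem_self_adj P hPu S hS hadj)
    by_contra hgt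
    have hmemC : (c, d) ∈ C :=
      (hCmem c d).mpr ⟨hcd, fun hv => hv0S (hsub v₀ hv).1, by omega⟩
    have hge : (S u c).card ≤ (S c d).card := hmin (c, d) hmemC
    omega
  -- upper bound on S u c
  have hcardS := TreeSplitAux.S_card P hP hPu S hS hadj
  have hub : (S u c).card ≤ B := by
    have h1 : (Δ - 1) * ∑ d ∈ (G.neighborFinset c).erase u, (S c d).card
        ≤ ((G.neighborFinset c).erase u).card * (B - 1) := by
      rw [Finset.mul_sum]
      calc ∑ d ∈ (G.neighborFinset c).erase u, (Δ - 1) * (S c d).card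
          ≤ ∑ _d ∈ (G.neighborFinset c).erase u, (B - 1) := Finset.sum_le_sum hchild
        _ = _ := by rw [Finset.sum_const, smul_eq_mul]
    have hdegc : ((G.neighborFinset c).erase u).card ≤ Δ - 1 := by
      rw [Finset.card_erase_of_mem (by rw [SimpleGraph.mem_neighborFinset]; exact hadj.symm)]
      have h1 := hmaxdeg c
      have h2 : (G.neighborFinset c).card = G.degree c := G.card_neighborFinset_eq_degree c
      omega
    have h2 : (Δ - 1) * ∑ d ∈ (G.neighborFinset c).erase u, (S c d).card
        ≤ (Δ - 1) * (B - 1) := h1.trans (Nat.mul_le_mul_right _ hdegc)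
    have h3 : ∑ d ∈ (G.neighborFinset c).erase u, (S c d).card ≤ B - 1 :=
      Nat.le_of_mul_le_mul_left h2 hΔ1
    omega
  -- assemble
  refine ⟨S u c, Finset.univ \ S u c, Finset.disjoint_sdiff, ?_, ?_, ?_, ?_, ?_, ?_, hub, ?_⟩
  · rw [Finset.union_sdiff_of_subset (Finset.subset_univ _)]
  · exact ⟨c, TreeSplitAux.mem_self_adj P hPu S hS hadj⟩
  · exact ⟨u, Finset.mem_sdiff.mpr ⟨Finset.mem_univ _,
      TreeSplitAux.not_self_mem P hPu S hS u c⟩⟩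
  · -- V'' connected
    rw [SimpleGraph.connected_iff]
    constructor
    · rintro ⟨a, ha⟩ ⟨b, hb⟩
      have ha' : a ∈ S u c := by simpa using ha
      have hb' : b ∈ S u c := by simpa using hb
      have hreach : ∀ (w : V) (hw : w ∈ S u c),
          (G.induce ((S u c : Set V))).Reachable
            ⟨c, by simp [TreeSplitAux.mem_self_adj P hPu S hS hadj]⟩ ⟨w, by simp [hw]⟩ := by
        intro w hw
        exact TreeSplitAux.reach_induce (S u c : Set V) (P c w)
          (fun x hx => by
            simpa using TreeSplitAux.support_subset_S P hP hPu S hS hadj hw x hx) _ _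
      exact (hreach a ha').symm.trans (hreach b hb')
    · exact ⟨⟨c, by simp [TreeSplitAux.mem_self_adj P hPu S hS hadj]⟩⟩
  · -- V' connected
    rw [SimpleGraph.connected_iff]
    have humem : u ∈ Finset.univ \ S u c := Finset.mem_sdiff.mpr
      ⟨Finset.mem_univ _, TreeSplitAux.not_self_mem P hPu S hS u c⟩
    constructor
    · rintro ⟨a, ha⟩ ⟨b, hb⟩
      have ha' : a ∉ S u c := by
        simp only [Finset.coe_sdiff, Finset.coe_univ, Set.mem_diff] at ha; exact ha.2
      have hb' : b ∉ S u c := by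
        simp only [Finset.coe_sdiff, Finset.coe_univ, Set.mem_diff] at hb; exact hb.2
      have hreach : ∀ (w : V) (hw : w ∉ S u c),
          (G.induce ((Finset.univ \ S u c : Finset V) : Set V)).Reachable
            ⟨u, by simpa using humem⟩ ⟨w, by simp [hw]⟩ := by
        intro w hw
        exact TreeSplitAux.reach_induce _ (P u w)
          (fun x hx => by
            simpa using TreeSplitAux.support_not_mem P hP hPu S hS hw x hx) _ _
      exact (hreach a ha').symm.trans (hreach b hb')
    · exact ⟨⟨u, by simpa using humem⟩⟩
  · -- lower bound
    have hlow' : ((B : ℝ) - 1) < ((Δ : ℝ) - 1) * (S u c).card := by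
      have hcast : ((B - 1 : ℕ) : ℝ) < (((Δ - 1) * (S u c).card : ℕ) : ℝ) := by
        exact_mod_cast hlow
      rw [Nat.cast_mul, Nat.cast_sub hB, Nat.cast_sub (by omega : 1 ≤ Δ)] at hcast
      simpa using hcast
    have hΔR : (1 : ℝ) < (Δ : ℝ) := by exact_mod_cast (by omega : 1 < Δ)
    rw [div_lt_iff₀ (sub_pos.mpr hΔR)]
    linarith [hlow']
  · exact Finset.mem_sdiff.mpr ⟨Finset.mem_univ _, hv0S⟩
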